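/- With notation as in Lemma 4.1 of the paper, the characters (λ, μ) ↦ ϱ^{λ,μ}(ω'_η ω_φ) on the group Λ × Λ, indexed by (η, φ) ∈ Q × Q, are pairwise distinct: if ϱ^{λ,μ}(ω'_η ω_φ) = ϱ^{λ,μ}(ω'_ζ ω_ψ) for all (λ, μ) ∈ Λ × Λ, then (η, φ) = (ζ, ψ). -/

import Mathlib

open Finset

/-- Complex power with a rational exponent (principal branch). -/
noncomputable def zq (z : ℂ) (q : ℚ) : ℂ := z ^ (q : ℂ)

/-- `(ε_j, λ)` for `λ = Σ λ_i ϖ_i` in the weight lattice of `so_{2n+1}`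
(`ϖ_i = ε_1 + ⋯ + ε_i` for `i < n`, `ϖ_n = (ε_1 + ⋯ + ε_n)/2`; 0-indexed,
rank `n+1`). -/
def epsW {n : ℕ} (lam : Fin (n+1) → ℤ) (j : Fin (n+1)) : ℚ :=
  (∑ i ∈ univ.filter (fun i => j ≤ i ∧ i ≠ Fin.last n), (lam i : ℚ))
    + (lam (Fin.last n) : ℚ) / 2

/-- The coefficient of `α_j` when the weight `λ` is written in the simple-root
basis: `c_j = Σ_{k ≤ j} (ε_k, λ)`. -/
def alphaCoordW {n : ℕ} (lam : Fin (n+1) → ℤ) (j : Fin (n+1)) : ℚ :=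
  ∑ i ∈ univ.filter (· ≤ j), epsW lam i

/-- `(ε_i, ζ)` for `ζ = Σ ζ_j α_j` in the root lattice of `B_{n+1}`. -/
def epsQ {n : ℕ} (ζ : Fin (n+1) → ℤ) (i : Fin (n+1)) : ℤ :=
  ζ i - (if h : 0 < (i : ℕ) then ζ ⟨(i : ℕ) - 1, by omega⟩ else 0)

/-- The pairing value `⟨ω'_ζ, ω_i⟩` for `ζ` in the root lattice. -/
noncomputable def pgQ (r s : ℂ) {n : ℕ} (ζ : Fin (n+1) → ℤ) (i : Fin (n+1)) : ℂ :=
  if h : (i : ℕ) + 1 < n + 1 then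
    r ^ (2 * epsQ ζ i) * s ^ (2 * epsQ ζ ⟨(i : ℕ) + 1, h⟩)
  else
    r ^ (2 * epsQ ζ i) * (r * s) ^ (-(ζ i))

/-- The pairing value `⟨ω'_λ, ω_i⟩` for `λ` in the weight lattice. -/
noncomputable def pgW (r s : ℂ) {n : ℕ} (lam : Fin (n+1) → ℤ) (i : Fin (n+1)) : ℂ :=
  if i ≠ Fin.last n then
    zq r (2 * epsW lam i) * zq s (2 * epsW lam (i + 1))
  else
    zq r (2 * epsW lam i) * zq (r * s) (-(alphaCoordW lam (Fin.last n)))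

/-- `⟨ω'_η, ω_λ⟩` for `η` in the root lattice and `λ` a weight, extended
bimultiplicatively. -/
noncomputable def pairQW (r s : ℂ) {n : ℕ} (η : Fin (n+1) → ℤ)
    (lam : Fin (n+1) → ℤ) : ℂ :=
  ∏ i : Fin (n+1), zq (pgQ r s η i) (alphaCoordW lam i)

/-- `⟨ω'_λ, ω_φ⟩` for `λ` a weight and `φ` in the root lattice. -/
noncomputable def pairWQ (r s : ℂ) {n : ℕ} (lam : Fin (n+1) → ℤ)
    (φ : Fin (n+1) → ℤ) : ℂ :=
  ∏ i : Fin (n+1), (pgW r s lam i) ^ (φ i)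

/-- `ϱ^{λ,0}(ω'_η ω_φ) = ϱ^λ(ω'_η ω_φ) = ⟨ω'_η, ω_λ⟩⁻¹ ⟨ω'_λ, ω_φ⟩`. -/
noncomputable def rhoLam (r s : ℂ) {n : ℕ} (lam η φ : Fin (n+1) → ℤ) : ℂ :=
  (pairQW r s η lam)⁻¹ * pairWQ r s lam φ

/-- The inner product `(η, μ)` of `η = Σ η_i α_i` in the root lattice with
`μ = Σ μ_i ϖ_i` in the weight lattice: `(α_i, ϖ_i) = (α_i,α_i)/2`. -/
def ipQW {n : ℕ} (η μ : Fin (n+1) → ℤ) : ℚ :=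
  ∑ i : Fin (n+1), (η i : ℚ) * (μ i : ℚ) * (if i ≠ Fin.last n then 1 else 1/2)

/-- `ϱ^{λ,μ}(ω'_η ω_φ) = ϱ^λ(ω'_η ω_φ) · (rs⁻¹)^{(η+φ,μ)}`. -/
noncomputable def rhoLM (r s : ℂ) {n : ℕ} (lam μ η φ : Fin (n+1) → ℤ) : ℂ :=
  rhoLam r s lam η φ * zq (r * s⁻¹) (ipQW (η + φ) μ)


lemma zq_zero (z : ℂ) : zq z 0 = 1 := by simp [zq]

lemma zq_int (z : ℂ) (m : ℤ) : zq z (m : ℚ) = z ^ m := by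
  unfold zq; push_cast; exact Complex.cpow_intCast z m

lemma zpow_sum' {α : Type*} (r : ℂ) (hr : r ≠ 0) (t : Finset α) (f : α → ℤ) :
    r ^ (∑ i ∈ t, f i) = ∏ i ∈ t, r ^ f i := by
  classical
  induction t using Finset.induction_on with
  | empty => simp
  | insert _ _ hx ih =>
      rw [Finset.sum_insert hx, Finset.prod_insert hx, zpow_add₀ hr, ih]

lemma mul_rs (r s : ℂ) (hr : r ≠ 0) (hs : s ≠ 0) (a b c d : ℤ) :
    (r ^ a * s ^ b) * (r ^ c * s ^ d) = r ^ (a + c) * s ^ (b + d) := by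
  rw [zpow_add₀ hr, zpow_add₀ hs]; ring

lemma rs_eq (r s : ℂ) (hr : r ≠ 0) (hs : s ≠ 0)
    (hrs : ∀ k l : ℤ, r ^ k * s ^ l = 1 → k = 0 ∧ l = 0)
    (a b c d : ℤ) (h : r ^ a * s ^ b = r ^ c * s ^ d) : a = c ∧ b = d := by
  have h2 : r ^ (a - c) * s ^ (b - d) = 1 := by
    have hrc : r ^ c ≠ 0 := zpow_ne_zero _ hr
    have hsd : s ^ d ≠ 0 := zpow_ne_zero _ hs
    rw [zpow_sub₀ hr, zpow_sub₀ hs, div_mul_div_comm, h, div_self (mul_ne_zero hrc hsd)]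
  have := hrs _ _ h2
  omega

lemma epsW_zero {n : ℕ} (j : Fin (n+1)) : epsW (0 : Fin (n+1) → ℤ) j = 0 := by
  simp [epsW]

lemma alphaCoordW_zero {n : ℕ} (j : Fin (n+1)) :
    alphaCoordW (0 : Fin (n+1) → ℤ) j = 0 := by
  simp [alphaCoordW, epsW_zero]

lemma rhoLam_zero {n : ℕ} (r s : ℂ) (η φ : Fin (n+1) → ℤ) :
    rhoLam r s (0 : Fin (n+1) → ℤ) η φ = 1 := by
  have h1 : ∀ i : Fin (n+1), zq (pgQ r s η i) (alphaCoordW 0 i) = 1 := by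
    intro i
    rw [alphaCoordW_zero, zq_zero]
  have h2 : ∀ i : Fin (n+1), pgW r s (0 : Fin (n+1) → ℤ) i = 1 := by
    intro i
    unfold pgW
    split <;> simp [zq_zero, epsW_zero, alphaCoordW_zero]
  unfold rhoLam pairQW pairWQ
  simp [h1, h2]

lemma zq_eq_imp {t : ℂ} (ht : t ≠ 0) {a b : ℚ} (hab : zq t a = zq t b) (m : ℤ)
    (hm : 2 * (a - b) = (m : ℚ)) : t ^ m = 1 := by
  have hb : t ^ ((b : ℂ)) ≠ 0 := by
    intro h0
    exact ht ((Complex.cpow_eq_zero_iff _ _).1 h0).1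
  have h1 : zq t (a - b) = 1 := by
    unfold zq at *
    rw [Rat.cast_sub, Complex.cpow_sub _ _ ht, hab, div_self hb]
  have h2 : zq t ((a - b) + (a - b)) = zq t (a - b) * zq t (a - b) := by
    unfold zq; push_cast; exact Complex.cpow_add _ _ ht
  calc t ^ m = zq t (m : ℚ) := (zq_int t m).symm
    _ = zq t ((a - b) + (a - b)) := congrArg (zq t) (by rw [← hm]; ring)
    _ = 1 := by rw [h2, h1, one_mul]

lemma ipQW_single {n : ℕ} (χ : Fin (n+1) → ℤ) (j : Fin (n+1)) :
    ipQW χ (Pi.single j 1) = (χ j : ℚ) * (if j ≠ Fin.last n then 1 else 1/2) := by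
  unfold ipQW
  rw [Fintype.sum_eq_single j]
  · simp
  · intro i hij
    simp [Pi.single_apply, hij]

/-- Total coercion `ℕ → Fin (n+1)` truncating at `n`. -/
def pad (n m : ℕ) : Fin (n+1) := ⟨min m n, by omega⟩

lemma pad_val {n m : ℕ} (h : m ≤ n) : ((pad n m : Fin (n+1)) : ℕ) = m := by
  simp [pad]; omega

lemma pad_eq {n m : ℕ} (h : m < n + 1) : pad n m = ⟨m, h⟩ := by
  apply Fin.ext; simp [pad]; omega

lemma pad_self {n : ℕ} (a : Fin (n+1)) : pad n (a : ℕ) = a := by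
  apply Fin.ext; have := a.isLt; simp [pad]; omega

lemma filter_ge_sum {n : ℕ} (j : Fin (n+1)) (g : Fin (n+1) → ℚ) :
    ∑ i ∈ univ.filter (fun i => j ≤ i ∧ i ≠ Fin.last n), g i
      = ∑ m ∈ Finset.Ico (j : ℕ) n, g (pad n m) := by
  refine Finset.sum_nbij' (fun i => (i : ℕ)) (fun m => pad n m) ?_ ?_ ?_ ?_ ?_
  · intro a ha
    simp only [Finset.mem_filter, Finset.mem_univ, true_and] at ha
    have h1 : (j : ℕ) ≤ (a : ℕ) := ha.1
    have h2 : (a : ℕ) ≠ n := fun hc => ha.2 (Fin.ext (by simpa using hc))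
    have h3 := a.isLt
    show (a : ℕ) ∈ Finset.Ico (j : ℕ) n
    rw [Finset.mem_Ico]
    omega
  · intro m hm
    rw [Finset.mem_Ico] at hm
    simp only [Finset.mem_filter, Finset.mem_univ, true_and]
    constructor
    · show (j : ℕ) ≤ ((pad n m : Fin (n+1)) : ℕ)
      rw [pad_val (by omega)]; omega
    · intro hc
      have : ((pad n m : Fin (n+1)) : ℕ) = n := by rw [hc]; rfl
      rw [pad_val (by omega)] at this; omega
  · intro a _
    exact pad_self a
  · intro m hm
    rw [Finset.mem_Ico] at hm
    exact pad_val (by omega)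
  · intro a _
    rw [pad_self]

lemma filter_le_sum {n : ℕ} (j : Fin (n+1)) (g : Fin (n+1) → ℚ) :
    ∑ i ∈ univ.filter (· ≤ j), g i
      = ∑ m ∈ Finset.range ((j : ℕ) + 1), g (pad n m) := by
  refine Finset.sum_nbij' (fun i => (i : ℕ)) (fun m => pad n m) ?_ ?_ ?_ ?_ ?_
  · intro a ha
    simp only [Finset.mem_filter, Finset.mem_univ, true_and] at ha
    have h1 : (a : ℕ) ≤ (j : ℕ) := ha
    show (a : ℕ) ∈ Finset.range ((j : ℕ) + 1)
    rw [Finset.mem_range]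
    omega
  · intro m hm
    rw [Finset.mem_range] at hm
    have hj := j.isLt
    simp only [Finset.mem_filter, Finset.mem_univ, true_and]
    show ((pad n m : Fin (n+1)) : ℕ) ≤ (j : ℕ)
    rw [pad_val (by omega)]; omega
  · intro a _
    exact pad_self a
  · intro m hm
    rw [Finset.mem_range] at hm
    have hj := j.isLt
    exact pad_val (by omega)
  · intro a _
    rw [pad_self]

lemma sum_Ico_telescope (F : ℕ → ℚ) (a b : ℕ) (hab : a ≤ b) :
    ∑ m ∈ Finset.Ico a b, (F m - F (m+1)) = F a - F b := by
  rw [Finset.sum_Ico_eq_sum_range]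
  calc ∑ m ∈ Finset.range (b - a), (F (a + m) - F (a + m + 1))
      = F (a + 0) - F (a + (b - a)) := Finset.sum_range_sub' (fun i => F (a + i)) (b - a)
    _ = F a - F b := by rw [Nat.add_zero, Nat.add_sub_cancel' hab]

/-- discrete derivative of the indicator of `{kv}`. -/
def EkN (kv m : ℕ) : ℤ := (if m = kv then 1 else 0) - (if m = kv + 1 then 1 else 0)

/-- the weight whose `ε`-coordinates are `EkN kv` and whose root coordinates are
the indicator of `{kv}`. -/
def lamk (n kv : ℕ) : Fin (n+1) → ℤ :=
  fun i => if (i : ℕ) < n then EkN kv (i : ℕ) - EkN kv ((i : ℕ) + 1) else 2 * EkN kv n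

lemma lamk_last (n kv : ℕ) : lamk n kv (Fin.last n) = 2 * EkN kv n := by
  simp [lamk]

lemma epsW_lamk (n kv : ℕ) (j : Fin (n+1)) :
    epsW (lamk n kv) j = ((EkN kv (j : ℕ) : ℤ) : ℚ) := by
  unfold epsW
  rw [filter_ge_sum, lamk_last]
  have hj := j.isLt
  have hcong : ∀ m ∈ Finset.Ico (j : ℕ) n,
      ((lamk n kv (pad n m) : ℤ) : ℚ)
        = ((EkN kv m : ℤ) : ℚ) - ((EkN kv (m + 1) : ℤ) : ℚ) := by
    intro m hm
    rw [Finset.mem_Ico] at hm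
    have h1 : ((pad n m : Fin (n+1)) : ℕ) = m := pad_val (by omega)
    unfold lamk
    rw [h1, if_pos hm.2]
    push_cast
    ring
  rw [Finset.sum_congr rfl hcong,
    sum_Ico_telescope (fun m => ((EkN kv m : ℤ) : ℚ)) (j : ℕ) n (by omega)]
  push_cast
  ring

lemma alphaCoordW_lamk (n kv : ℕ) (j : Fin (n+1)) :
    alphaCoordW (lamk n kv) j = ((if (j : ℕ) = kv then (1:ℤ) else 0) : ℤ) := by
  unfold alphaCoordW
  rw [filter_le_sum]
  have hj := j.isLt
  have hcong : ∀ m ∈ Finset.range ((j : ℕ) + 1),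
      epsW (lamk n kv) (pad n m)
        = ((if m = kv then (1:ℚ) else 0) - (if m = kv + 1 then (1:ℚ) else 0)) := by
    intro m hm
    rw [Finset.mem_range] at hm
    rw [epsW_lamk, pad_val (by omega)]
    unfold EkN
    push_cast
    split_ifs <;> norm_num
  rw [Finset.sum_congr rfl hcong, Finset.sum_sub_distrib,
    Finset.sum_ite_eq' (Finset.range ((j : ℕ) + 1)) kv (fun _ => (1:ℚ)),
    Finset.sum_ite_eq' (Finset.range ((j : ℕ) + 1)) (kv + 1) (fun _ => (1:ℚ))]
  simp only [Finset.mem_range]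
  split_ifs <;> norm_num <;> omega

/-- evaluating a sum of an indicator-supported family over `Fin m`. -/
lemma sum_indicator {m : ℕ} (K : ℕ) (f : Fin m → ℤ) :
    (∑ j : Fin m, if (j : ℕ) = K then f j else 0)
      = if h : K < m then f ⟨K, h⟩ else 0 := by
  split_ifs with h
  · rw [Fintype.sum_eq_single (⟨K, h⟩ : Fin m)]
    · rw [if_pos rfl]
    · intro i hi
      rw [if_neg]
      intro hc
      exact hi (Fin.ext hc)
  · apply Finset.sum_eq_zero
    intro i _
    rw [if_neg]
    have := i.isLt
    omega

lemma rs_pow (r s : ℂ) (a b c : ℤ) :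
    (r ^ a * s ^ b) ^ c = r ^ (a * c) * s ^ (b * c) := by
  rw [mul_zpow, ← zpow_mul, ← zpow_mul]

lemma pairWQ_formula {n : ℕ} (r s : ℂ) (hr : r ≠ 0) (hs : s ≠ 0)
    (lam : Fin (n+1) → ℤ) (E A : Fin (n+1) → ℤ)
    (hE : ∀ i, epsW lam i = ((E i : ℤ) : ℚ))
    (hA : ∀ i, alphaCoordW lam i = ((A i : ℤ) : ℚ))
    (τ : Fin (n+1) → ℤ) :
    pairWQ r s lam τ =
      r ^ ((∑ j : Fin n, 2 * E j.castSucc * τ j.castSucc)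
            + (2 * E (Fin.last n) - A (Fin.last n)) * τ (Fin.last n))
      * s ^ ((∑ j : Fin n, 2 * E j.succ * τ j.castSucc)
            + (- A (Fin.last n)) * τ (Fin.last n)) := by
  unfold pairWQ
  rw [Fin.prod_univ_castSucc]
  have hfac : ∀ j ∈ (univ : Finset (Fin n)), (pgW r s lam j.castSucc) ^ (τ j.castSucc)
      = r ^ (2 * E j.castSucc * τ j.castSucc) * s ^ (2 * E j.succ * τ j.castSucc) := by
    intro j _
    have hne : j.castSucc ≠ Fin.last n := Fin.ne_of_lt (Fin.castSucc_lt_last j)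
    have hcs : j.castSucc + 1 = j.succ := by
      apply Fin.ext
      rw [Fin.val_add_one, if_neg hne]
      simp
    rw [pgW, if_pos hne, hcs, hE, hE,
      show (2 : ℚ) * ((E j.castSucc : ℤ) : ℚ) = (((2 * E j.castSucc : ℤ) : ℤ) : ℚ) by push_cast; ring,
      show (2 : ℚ) * ((E j.succ : ℤ) : ℚ) = (((2 * E j.succ : ℤ) : ℤ) : ℚ) by push_cast; ring,
      zq_int, zq_int, rs_pow]
  have hlast : (pgW r s lam (Fin.last n)) ^ (τ (Fin.last n))
      = r ^ ((2 * E (Fin.last n) - A (Fin.last n)) * τ (Fin.last n))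
        * s ^ ((- A (Fin.last n)) * τ (Fin.last n)) := by
    rw [pgW, if_neg (by simp), hE, hA,
      show (2 : ℚ) * ((E (Fin.last n) : ℤ) : ℚ) = (((2 * E (Fin.last n) : ℤ) : ℤ) : ℚ) by push_cast; ring,
      show -(((A (Fin.last n) : ℤ)) : ℚ) = (((- A (Fin.last n) : ℤ) : ℤ) : ℚ) by push_cast; ring,
      zq_int, zq_int]
    rw [show (r * s) ^ (- A (Fin.last n)) = r ^ (- A (Fin.last n)) * s ^ (- A (Fin.last n)) from mul_zpow r s _]
    rw [show r ^ (2 * E (Fin.last n)) * (r ^ (- A (Fin.last n)) * s ^ (- A (Fin.last n)))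
        = (r ^ (2 * E (Fin.last n)) * r ^ (- A (Fin.last n))) * s ^ (- A (Fin.last n)) by ring,
      ← zpow_add₀ hr,
      show 2 * E (Fin.last n) + - A (Fin.last n) = 2 * E (Fin.last n) - A (Fin.last n) by ring,
      rs_pow]
  rw [Finset.prod_congr rfl hfac, Finset.prod_mul_distrib,
    ← zpow_sum' r hr, ← zpow_sum' s hs, hlast, mul_rs r s hr hs]

lemma pairQW_formula {n : ℕ} (r s : ℂ) (hr : r ≠ 0) (hs : s ≠ 0)
    (lam : Fin (n+1) → ℤ) (A : Fin (n+1) → ℤ)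
    (hA : ∀ i, alphaCoordW lam i = ((A i : ℤ) : ℚ))
    (χ : Fin (n+1) → ℤ) :
    pairQW r s χ lam =
      r ^ ((∑ j : Fin n, 2 * epsQ χ j.castSucc * A j.castSucc)
            + (2 * epsQ χ (Fin.last n) - χ (Fin.last n)) * A (Fin.last n))
      * s ^ ((∑ j : Fin n, 2 * epsQ χ j.succ * A j.castSucc)
            + (- χ (Fin.last n)) * A (Fin.last n)) := by
  unfold pairQW
  rw [Fin.prod_univ_castSucc]
  have hfac : ∀ j ∈ (univ : Finset (Fin n)), zq (pgQ r s χ j.castSucc) (alphaCoordW lam j.castSucc)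
      = r ^ (2 * epsQ χ j.castSucc * A j.castSucc) * s ^ (2 * epsQ χ j.succ * A j.castSucc) := by
    intro j _
    have hlt : ((j.castSucc : Fin (n+1)) : ℕ) + 1 < n + 1 := by
      have := j.isLt
      simp only [Fin.coe_castSucc]
      omega
    have hidx : (⟨((j.castSucc : Fin (n+1)) : ℕ) + 1, hlt⟩ : Fin (n+1)) = j.succ := rfl
    rw [hA, zq_int, pgQ, dif_pos hlt, hidx, rs_pow]
  have hlast : zq (pgQ r s χ (Fin.last n)) (alphaCoordW lam (Fin.last n))
      = r ^ ((2 * epsQ χ (Fin.last n) - χ (Fin.last n)) * A (Fin.last n))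
        * s ^ ((- χ (Fin.last n)) * A (Fin.last n)) := by
    rw [hA, zq_int, pgQ, dif_neg (by simp)]
    rw [show (r * s) ^ (- χ (Fin.last n)) = r ^ (- χ (Fin.last n)) * s ^ (- χ (Fin.last n)) from mul_zpow r s _]
    rw [show r ^ (2 * epsQ χ (Fin.last n)) * (r ^ (- χ (Fin.last n)) * s ^ (- χ (Fin.last n)))
        = (r ^ (2 * epsQ χ (Fin.last n)) * r ^ (- χ (Fin.last n))) * s ^ (- χ (Fin.last n)) by ring,
      ← zpow_add₀ hr,
      show 2 * epsQ χ (Fin.last n) + - χ (Fin.last n) = 2 * epsQ χ (Fin.last n) - χ (Fin.last n) by ring,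
      rs_pow]
  rw [Finset.prod_congr rfl hfac, Finset.prod_mul_distrib,
    ← zpow_sum' r hr, ← zpow_sum' s hs, hlast, mul_rs r s hr hs]

lemma rhoLam_formula {n : ℕ} (r s : ℂ) (hr : r ≠ 0) (hs : s ≠ 0)
    (lam : Fin (n+1) → ℤ) (E A : Fin (n+1) → ℤ)
    (hE : ∀ i, epsW lam i = ((E i : ℤ) : ℚ))
    (hA : ∀ i, alphaCoordW lam i = ((A i : ℤ) : ℚ))
    (χ τ : Fin (n+1) → ℤ) :
    rhoLam r s lam χ τ =
      r ^ (((∑ j : Fin n, 2 * E j.castSucc * τ j.castSucc)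
            + (2 * E (Fin.last n) - A (Fin.last n)) * τ (Fin.last n))
          - ((∑ j : Fin n, 2 * epsQ χ j.castSucc * A j.castSucc)
            + (2 * epsQ χ (Fin.last n) - χ (Fin.last n)) * A (Fin.last n)))
      * s ^ (((∑ j : Fin n, 2 * E j.succ * τ j.castSucc)
            + (- A (Fin.last n)) * τ (Fin.last n))
          - ((∑ j : Fin n, 2 * epsQ χ j.succ * A j.castSucc)
            + (- χ (Fin.last n)) * A (Fin.last n))) := by
  unfold rhoLam
  rw [pairWQ_formula r s hr hs lam E A hE hA τ, pairQW_formula r s hr hs lam A hA χ,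
    mul_inv, ← zpow_neg, ← zpow_neg, mul_mul_mul_comm, ← zpow_add₀ hr, ← zpow_add₀ hs]
  congr 1
  · congr 1
    ring
  · congr 1
    ring

def Ek (n kv : ℕ) : Fin (n+1) → ℤ := fun i => EkN kv (i : ℕ)

def Ak (n kv : ℕ) : Fin (n+1) → ℤ := fun i => if (i : ℕ) = kv then 1 else 0

lemma hEk (n kv : ℕ) : ∀ i, epsW (lamk n kv) i = ((Ek n kv i : ℤ) : ℚ) := fun i =>
  epsW_lamk n kv i

lemma hAk (n kv : ℕ) : ∀ i, alphaCoordW (lamk n kv) i = ((Ak n kv i : ℤ) : ℚ) := fun i =>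
  alphaCoordW_lamk n kv i

lemma Ek_last (n kv : ℕ) :
    Ek n kv (Fin.last n) = (if n = kv then 1 else 0) - (if n = kv + 1 then 1 else 0) := rfl

lemma Ak_last (n kv : ℕ) : Ak n kv (Fin.last n) = (if n = kv then 1 else 0) := rfl

lemma sumE_eval {n : ℕ} (kv : ℕ) (τ : Fin (n+1) → ℤ) :
    (∑ j : Fin n, 2 * Ek n kv j.castSucc * τ j.castSucc)
      = (if kv < n then 2 * τ (pad n kv) else 0)
        - (if kv + 1 < n then 2 * τ (pad n (kv+1)) else 0) := by
  have step : ∀ j ∈ (univ : Finset (Fin n)), 2 * Ek n kv j.castSucc * τ j.castSucc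
      = (if (j : ℕ) = kv then 2 * τ j.castSucc else 0)
        - (if (j : ℕ) = kv + 1 then 2 * τ j.castSucc else 0) := by
    intro j _
    unfold Ek EkN
    simp only [Fin.coe_castSucc]
    split_ifs <;> ring
  rw [Finset.sum_congr rfl step, Finset.sum_sub_distrib,
    sum_indicator kv (fun j => 2 * τ j.castSucc),
    sum_indicator (kv + 1) (fun j => 2 * τ j.castSucc)]
  congr 1
  · split_ifs with h1
    · rw [show (⟨kv, h1⟩ : Fin n).castSucc = pad n kv from
        Fin.ext (by rw [pad_val (by omega)]; rfl)]
    · rfl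
  · split_ifs with h1
    · rw [show (⟨kv + 1, h1⟩ : Fin n).castSucc = pad n (kv + 1) from
        Fin.ext (by rw [pad_val (by omega)]; rfl)]
    · rfl

lemma sumA_eval {n : ℕ} (kv : ℕ) (χ : Fin (n+1) → ℤ) :
    (∑ j : Fin n, 2 * epsQ χ j.castSucc * Ak n kv j.castSucc)
      = (if kv < n then 2 * epsQ χ (pad n kv) else 0) := by
  have step : ∀ j ∈ (univ : Finset (Fin n)), 2 * epsQ χ j.castSucc * Ak n kv j.castSucc
      = (if (j : ℕ) = kv then 2 * epsQ χ j.castSucc else 0) := by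
    intro j _
    unfold Ak
    simp only [Fin.coe_castSucc]
    split_ifs <;> ring
  rw [Finset.sum_congr rfl step, sum_indicator kv (fun j => 2 * epsQ χ j.castSucc)]
  split_ifs with h1
  · rw [show (⟨kv, h1⟩ : Fin n).castSucc = pad n kv from
      Fin.ext (by rw [pad_val (by omega)]; rfl)]
  · rfl

lemma epsQ_pad {n : ℕ} (χ : Fin (n+1) → ℤ) (m : ℕ) (hm : m ≤ n) :
    epsQ χ (pad n m) = χ (pad n m) - (if 0 < m then χ (pad n (m-1)) else 0) := by
  have hv : ((pad n m : Fin (n+1)) : ℕ) = m := pad_val hm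
  rcases Nat.eq_zero_or_pos m with h0 | h0
  · subst h0
    unfold epsQ
    rw [dif_neg (by omega), if_neg (by omega)]
  · unfold epsQ
    rw [dif_pos (by omega), if_pos h0]
    congr 2
    apply Fin.ext
    show ((pad n m : Fin (n+1)) : ℕ) - 1 = ((pad n (m-1) : Fin (n+1)) : ℕ)
    rw [hv, pad_val (by omega)]

lemma last_eq_pad (n : ℕ) : Fin.last n = pad n n := by
  apply Fin.ext
  rw [pad_val (le_refl n)]
  rfl

/-- The characters `(λ, μ) ↦ ϱ^{λ,μ}(ω'_η ω_φ)` on `Λ × Λ`, indexed by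
`(η, φ) ∈ Q × Q`, are pairwise distinct: if they agree for all `(λ, μ)`, then
`(η, φ) = (ζ, ψ)`. -/
theorem stmt5 (n : ℕ) (r s : ℂ) (hr : r ≠ 0) (hs : s ≠ 0)
    (hrs : ∀ k l : ℤ, r ^ k * s ^ l = 1 → k = 0 ∧ l = 0)
    (η φ ζ ψ : Fin (n+1) → ℤ)
    (h : ∀ lam μ : Fin (n+1) → ℤ, rhoLM r s lam μ η φ = rhoLM r s lam μ ζ ψ) :
    η = ζ ∧ φ = ψ := by
  have ht : r * s⁻¹ ≠ 0 := mul_ne_zero hr (inv_ne_zero hs)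
  have tkey : ∀ m : ℤ, (r * s⁻¹) ^ m = 1 → m = 0 := by
    intro m hm
    rw [mul_zpow, inv_zpow, ← zpow_neg] at hm
    exact (hrs m (-m) hm).1
  -- Step 1: the `(r s⁻¹)^{(η+φ,μ)}` part forces `η + φ = ζ + ψ`.
  have hδ : ∀ i, η i + φ i = ζ i + ψ i := by
    intro j
    have hμ := h 0 (Pi.single j 1)
    unfold rhoLM at hμ
    rw [rhoLam_zero, rhoLam_zero, one_mul, one_mul, ipQW_single, ipQW_single] at hμ
    have hadd1 : ((η + φ) j : ℤ) = η j + φ j := rfl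
    have hadd2 : ((ζ + ψ) j : ℤ) = ζ j + ψ j := rfl
    rw [hadd1, hadd2] at hμ
    by_cases hj : j ≠ Fin.last n
    · rw [if_pos hj] at hμ
      have hm : (2 : ℚ) * ((((η j + φ j : ℤ) : ℚ)) * 1 - (((ζ j + ψ j : ℤ) : ℚ)) * 1)
          = ((2 * ((η j + φ j) - (ζ j + ψ j)) : ℤ) : ℚ) := by push_cast; ring
      have := tkey _ (zq_eq_imp ht hμ _ hm)
      omega
    · rw [if_neg hj] at hμ
      have hm : (2 : ℚ) * ((((η j + φ j : ℤ) : ℚ)) * (1/2) - (((ζ j + ψ j : ℤ) : ℚ)) * (1/2))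
          = ((((η j + φ j) - (ζ j + ψ j)) : ℤ) : ℚ) := by push_cast; ring
      have := tkey _ (zq_eq_imp ht hμ _ hm)
      omega
  -- Step 2: the equations coming from the test weights `lamk n m`.
  have keyD : ∀ m : ℕ, m ≤ n →
      ((ζ (pad n m) - η (pad n m)) - (if 0 < m then ζ (pad n (m-1)) - η (pad n (m-1)) else 0))
      + (if m < n then (ζ (pad n m) - η (pad n m)) - (ζ (pad n (m+1)) - η (pad n (m+1))) else 0)
      = 0 := by
    intro m hm
    have hμ := h (lamk n m) 0
    unfold rhoLM at hμ
    have hip : ∀ χ : Fin (n+1) → ℤ, ipQW χ (0 : Fin (n+1) → ℤ) = 0 := by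
      intro χ; simp [ipQW]
    rw [hip, hip, zq_zero, mul_one, mul_one] at hμ
    rw [rhoLam_formula r s hr hs (lamk n m) (Ek n m) (Ak n m) (hEk n m) (hAk n m) η φ,
        rhoLam_formula r s hr hs (lamk n m) (Ek n m) (Ak n m) (hEk n m) (hAk n m) ζ ψ] at hμ
    have main := (rs_eq r s hr hs hrs _ _ _ _ hμ).1
    rw [sumE_eval m φ, sumE_eval m ψ, sumA_eval m η, sumA_eval m ζ,
      Ek_last n m, Ak_last n m, last_eq_pad n] at main
    rw [epsQ_pad η m hm, epsQ_pad ζ m hm, epsQ_pad η n (le_refl n),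
      epsQ_pad ζ n (le_refl n)] at main
    have A1 := hδ (pad n m)
    have A2 := hδ (pad n (m+1))
    have A3 := hδ (pad n (m-1))
    have A4 := hδ (pad n n)
    have A5 := hδ (pad n (n-1))
    rcases Nat.lt_or_ge m n with h1 | h1
    · rcases Nat.lt_or_ge (m+1) n with h2 | h2
      · split_ifs at main ⊢ <;> omega
      · have h3 : m + 1 = n := by omega
        have hpp : pad n (m+1) = pad n n := by rw [h3]
        rw [hpp] at A2 ⊢
        split_ifs at main ⊢ <;> omega
    · have h3 : m = n := by omega
      subst h3
      split_ifs at main ⊢ <;> omega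
  -- downward induction: all the differences are equal to the one at `last`.
  have hallD : ∀ j : ℕ, j ≤ n →
      ζ (pad n (n - j)) - η (pad n (n - j)) = ζ (pad n n) - η (pad n n) := by
    intro j
    induction j using Nat.strong_induction_on with
    | _ j ih =>
      intro hj
      match j, ih, hj with
      | 0, _, _ => rfl
      | 1, ih, hj =>
        have k0 := keyD n (le_refl n)
        rw [if_pos (by omega : 0 < n), if_neg (by omega : ¬ n < n)] at k0
        omega
      | (j' + 2), ih, hj =>
        have hj1 : n - (j' + 1) ≤ n := by omega
        have k0 := keyD (n - (j' + 1)) hj1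
        rw [if_pos (by omega : 0 < n - (j' + 1)),
          if_pos (by omega : n - (j' + 1) < n)] at k0
        have e1 : n - (j' + 1) + 1 = n - j' := by omega
        have e2 : n - (j' + 1) - 1 = n - (j' + 2) := by omega
        rw [e1, e2] at k0
        have i1 := ih (j' + 1) (by omega) (by omega)
        have i2 := ih j' (by omega) (by omega)
        omega
  -- conclude that all differences vanish
  have hzero : ∀ m : ℕ, m ≤ n → ζ (pad n m) - η (pad n m) = 0 := by
    have hbase : ζ (pad n n) - η (pad n n) = 0 := by
      rcases Nat.eq_zero_or_pos n with h0 | h0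
      · have k0 := keyD 0 (by omega)
        rw [if_neg (by omega : ¬ (0:ℕ) < 0)] at k0
        subst h0
        rw [if_neg (by omega : ¬ (0:ℕ) < 0)] at k0
        omega
      · have k0 := keyD 0 (by omega)
        rw [if_neg (by omega : ¬ (0:ℕ) < 0), if_pos h0] at k0
        simp only [Nat.zero_add] at k0
        have i0 := hallD n (le_refl n)
        have i1 := hallD (n - 1) (by omega)
        rw [Nat.sub_sub_self (by omega : 1 ≤ n)] at i1
        rw [Nat.sub_self] at i0
        omega
    intro m hm
    have := hallD (n - m) (by omega)
    rw [Nat.sub_sub_self hm] at this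
    omega
  have hζη : η = ζ := by
    funext i
    have him := hzero (i : ℕ) (by omega)
    rw [pad_self i] at him
    omega
  refine ⟨hζη, ?_⟩
  funext i
  have := hδ i
  rw [hζη] at this
  omega
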